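/- Fix an odd integer n ≥ 3 and let H be the 6n × (4n²−2n) block–point incidence matrix of the construction, viewed over GF(2). Then every nonzero vector v ∈ GF(2)^{4n²−2n} with H v = 0 has Hamming weight at least 6; equivalently, no nonempty set of at most 5 columns of H is linearly dependent over GF(2). Combined with the existence of a weight-6 codeword, the minimum distance of the LDPC code with parity-check matrix H is exactly 6. -/

import Mathlib

def xfun (n j : ℕ) : ℕ := if j < n then 2 * j + 1 else 2 * (j - n)

def Blk (n j a : ℕ) : Finset ℕ :=
  {a, (j + a) % (2 * n) + 2 * n, (xfun n j + a) % (2 * n) + 4 * n}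

abbrev ColIdx (n : ℕ) := {p : Fin (2 * n) × Fin (2 * n) // (p.1 : ℕ) ≠ n}

def Hmat (n : ℕ) : Matrix (Fin (6 * n)) (ColIdx n) (ZMod 2) :=
  fun i p => if (i : ℕ) ∈ Blk n (p.1.1 : ℕ) (p.1.2 : ℕ) then 1 else 0

/-! ### auxiliary definitions and lemmas -/

def fA {n : ℕ} (q : ColIdx n) : ℕ := (q.1.2 : ℕ)
def fB {n : ℕ} (q : ColIdx n) : ℕ := ((q.1.1 : ℕ) + (q.1.2 : ℕ)) % (2 * n)
def fC {n : ℕ} (q : ColIdx n) : ℕ := (xfun n (q.1.1 : ℕ) + (q.1.2 : ℕ)) % (2 * n)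

lemma zmod2_ne_zero {x : ZMod 2} (h : x ≠ 0) : x = 1 := by revert h; revert x; decide

lemma small_eq {N x y : ℤ} (hd : N ∣ y - x) (h1 : -N < y - x) (h2 : y - x < N) : y = x := by
  obtain ⟨c, hc⟩ := hd
  have hN : 0 < N := by linarith
  have h0 : y - x = 0 := by
    rcases lt_trichotomy c 0 with h | h | h
    · have : N * c ≤ -N := by nlinarith
      linarith
    · simp [h] at hc; linarith
    · have : N ≤ N * c := by nlinarith
      linarith
  linarith

lemma mod_dvd {N x y : ℕ} (h : x % N = y % N) : (N : ℤ) ∣ (y : ℤ) - (x : ℤ) := Nat.ModEq.dvd h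

lemma xfun_lt {n j : ℕ} (hj : j < 2 * n) : xfun n j < 2 * n := by
  unfold xfun; split <;> omega

lemma xfun_int {n j : ℕ} (hj : j < 2 * n) (hjn : j ≠ n) :
    ((j:ℤ) < n ∧ (xfun n j : ℤ) = 2 * j + 1) ∨ ((n:ℤ) < j ∧ (xfun n j : ℤ) = 2 * j - 2 * n) := by
  unfold xfun
  by_cases h : j < n
  · left; rw [if_pos h]; omega
  · right; rw [if_neg h]; omega

lemma col_ext {n : ℕ} {p q : ColIdx n} (h1 : (p.1.1 : ℕ) = (q.1.1 : ℕ))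
    (h2 : (p.1.2 : ℕ) = (q.1.2 : ℕ)) : p = q :=
  Subtype.ext (Prod.ext (Fin.ext h1) (Fin.ext h2))

/-! ### pairwise injectivity of the three coordinates -/

lemma injAB {n : ℕ} {p q : ColIdx n} (hA : fA p = fA q) (hB : fB p = fB q) :
    p = q := by
  have hjp := p.1.1.isLt; have hjq := q.1.1.isLt
  have hd := mod_dvd hB
  have heq : ((q.1.1 : ℕ) + (q.1.2 : ℕ) : ℤ) = ((p.1.1 : ℕ) + (p.1.2 : ℕ) : ℤ) := by
    apply small_eq hd <;> (push_cast; simp only [fA] at hA; omega)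
  apply col_ext <;> (simp only [fA] at hA; push_cast at heq; omega)

lemma injAC {n : ℕ} {p q : ColIdx n} (hA : fA p = fA q) (hC : fC p = fC q) :
    p = q := by
  have hjp := p.1.1.isLt; have hjq := q.1.1.isLt
  have hxp := xfun_lt (n := n) (j := (p.1.1 : ℕ)) hjp
  have hxq := xfun_lt (n := n) (j := (q.1.1 : ℕ)) hjq
  have hip := xfun_int (n := n) hjp p.2
  have hiq := xfun_int (n := n) hjq q.2
  have hd := mod_dvd hC
  have heq : ((xfun n (q.1.1 : ℕ) + (q.1.2 : ℕ) : ℕ) : ℤ)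
      = ((xfun n (p.1.1 : ℕ) + (p.1.2 : ℕ) : ℕ) : ℤ) := by
    apply small_eq hd <;> (push_cast; simp only [fA] at hA; omega)
  apply col_ext <;> (simp only [fA] at hA; push_cast at heq; omega)

lemma injBC {n : ℕ} {p q : ColIdx n} (hB : fB p = fB q) (hC : fC p = fC q) :
    p = q := by
  have hjp := p.1.1.isLt; have hjq := q.1.1.isLt
  have hap := p.1.2.isLt; have haq := q.1.2.isLt
  have hip := xfun_int (n := n) hjp p.2
  have hiq := xfun_int (n := n) hjq q.2
  have hd1 := mod_dvd hB
  have hd2 := mod_dvd hC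
  have hd3 : (2 * n : ℤ) ∣ ((xfun n (q.1.1 : ℕ) : ℤ) - (q.1.1 : ℕ))
      - ((xfun n (p.1.1 : ℕ) : ℤ) - (p.1.1 : ℕ)) := by
    have := dvd_sub hd2 hd1
    push_cast at this ⊢
    convert this using 1
    · rfl
    · ring
  have heq : ((xfun n (q.1.1 : ℕ) : ℤ) - (q.1.1 : ℕ)) = ((xfun n (p.1.1 : ℕ) : ℤ) - (p.1.1 : ℕ)) := by
    apply small_eq hd3 <;> (push_cast; omega)
  have hj : (p.1.1 : ℕ) = (q.1.1 : ℕ) := by omega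
  have heq2 : ((q.1.1 : ℕ) + (q.1.2 : ℕ) : ℤ) = ((p.1.1 : ℕ) + (p.1.2 : ℕ) : ℤ) := by
    apply small_eq (by push_cast at hd1 ⊢; exact hd1) <;> (push_cast; omega)
  apply col_ext hj
  omega

/-! ### row sums -/

lemma row_sum {n : ℕ} (v : ColIdx n → ZMod 2) (hv : (Hmat n).mulVec v = 0)
    (i : Fin (6 * n)) (f : ColIdx n → ℕ) (c : ℕ)
    (hchar : ∀ q : ColIdx n, ((i : ℕ) ∈ Blk n (q.1.1 : ℕ) (q.1.2 : ℕ)) ↔ f q = c) :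
    ∑ q ∈ Finset.univ.filter (fun q => f q = c), v q = 0 := by
  have h := congrFun hv i
  simp only [Matrix.mulVec, dotProduct, Hmat, Pi.zero_apply] at h
  rw [Finset.sum_filter]
  have heq : (∑ q : ColIdx n, if f q = c then v q else 0)
      = ∑ q : ColIdx n, (if (i : ℕ) ∈ Blk n (q.1.1 : ℕ) (q.1.2 : ℕ) then 1 else 0) * v q := by
    apply Finset.sum_congr rfl
    intro q _
    by_cases hq : f q = c
    · simp [hq, (hchar q).mpr hq]
    · rw [if_neg hq, if_neg (fun hm => hq ((hchar q).mp hm)), zero_mul]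
  rw [heq, h]

lemma mate {n : ℕ} (v : ColIdx n → ZMod 2) (hv : (Hmat n).mulVec v = 0)
    (i : Fin (6 * n)) (f : ColIdx n → ℕ) (p : ColIdx n)
    (hchar : ∀ q : ColIdx n, ((i : ℕ) ∈ Blk n (q.1.1 : ℕ) (q.1.2 : ℕ)) ↔ f q = f p)
    (hp : v p ≠ 0) :
    ∃ q : ColIdx n, q ≠ p ∧ v q ≠ 0 ∧ f q = f p := by
  by_contra hcon
  push_neg at hcon
  have h := row_sum v hv i f (f p) hchar
  have hmem : p ∈ Finset.univ.filter (fun q => f q = f p) :=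
    Finset.mem_filter.mpr ⟨Finset.mem_univ p, rfl⟩
  rw [Finset.sum_eq_single_of_mem p hmem] at h
  · exact hp h
  · intro b hb hbp
    rcases eq_or_ne (v b) 0 with h0 | h0
    · exact h0
    · exact absurd ((Finset.mem_filter.mp hb).2) (hcon b hbp h0)

lemma fiber_even {n : ℕ} (v : ColIdx n → ZMod 2) (hv : (Hmat n).mulVec v = 0)
    (i : Fin (6 * n)) (f : ColIdx n → ℕ) (c : ℕ)
    (hchar : ∀ q : ColIdx n, ((i : ℕ) ∈ Blk n (q.1.1 : ℕ) (q.1.2 : ℕ)) ↔ f q = c) :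
    2 ∣ (Finset.univ.filter (fun q => v q ≠ 0 ∧ f q = c)).card := by
  have h := row_sum v hv i f c hchar
  have h2 : ∑ q ∈ Finset.univ.filter (fun q => v q ≠ 0 ∧ f q = c), v q = 0 := by
    refine Eq.trans (Finset.sum_subset ?_ ?_) h
    · intro q hq
      simp only [Finset.mem_filter] at hq ⊢
      exact ⟨hq.1, hq.2.2⟩
    · intro q hq hq2
      by_contra h0
      exact hq2 (Finset.mem_filter.mpr ⟨Finset.mem_univ q, h0, (Finset.mem_filter.mp hq).2⟩)
  have h3 : ∑ q ∈ Finset.univ.filter (fun q => v q ≠ 0 ∧ f q = c), v q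
      = ((Finset.univ.filter (fun q => v q ≠ 0 ∧ f q = c)).card : ZMod 2) := by
    rw [Finset.card_eq_sum_ones, Nat.cast_sum]
    apply Finset.sum_congr rfl
    intro q hq
    simp only [Finset.mem_filter] at hq
    simp [zmod2_ne_zero hq.2.1]
  rw [h3] at h2
  exact (ZMod.natCast_eq_zero_iff _ 2).mp h2

/-! ### row characterizations -/

lemma charA {n : ℕ} (c : ℕ) (hc : c < 2 * n) (q : ColIdx n) :
    c ∈ Blk n (q.1.1 : ℕ) (q.1.2 : ℕ) ↔ fA q = c := by
  have haq := q.1.2.isLt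
  simp only [Blk, Finset.mem_insert, Finset.mem_singleton, fA]
  constructor
  · rintro (h | h | h) <;> omega
  · intro h; omega

lemma charB {n : ℕ} (c : ℕ) (hc : c < 2 * n) (q : ColIdx n) :
    c + 2 * n ∈ Blk n (q.1.1 : ℕ) (q.1.2 : ℕ) ↔ fB q = c := by
  have haq := q.1.2.isLt
  simp only [Blk, Finset.mem_insert, Finset.mem_singleton, fB]
  constructor
  · rintro (h | h | h) <;> omega
  · intro h; omega

lemma charC {n : ℕ} (hn : 0 < n) (c : ℕ) (hc : c < 2 * n) (q : ColIdx n) :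
    c + 4 * n ∈ Blk n (q.1.1 : ℕ) (q.1.2 : ℕ) ↔ fC q = c := by
  have haq := q.1.2.isLt
  have hu : ((q.1.1 : ℕ) + (q.1.2 : ℕ)) % (2 * n) < 2 * n := Nat.mod_lt _ (by omega)
  simp only [Blk, Finset.mem_insert, Finset.mem_singleton, fC]
  constructor
  · rintro (h | h | h) <;> omega
  · intro h; omega

/-! ### the integer arithmetic core -/

lemma coef_bound {N t c : ℤ} (hN : 0 < N) (h : t = N * c) (h1 : -(2*N) < t) (h2 : t < 2*N) :
    -1 ≤ c ∧ c ≤ 1 := by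
  constructor
  · by_contra hcon
    have hc : c ≤ -2 := by omega
    have h3 : N * c ≤ N * (-2) := mul_le_mul_of_nonneg_left hc hN.le
    omega
  · by_contra hcon
    have hc : 2 ≤ c := by omega
    have h3 : N * 2 ≤ N * c := mul_le_mul_of_nonneg_left hc hN.le
    omega

lemma dvd_trichotomy {N t : ℤ} (hN : 0 < N) (hd : N ∣ t) (h1 : -(2*N) < t) (h2 : t < 2*N) :
    t = -N ∨ t = 0 ∨ t = N := by
  obtain ⟨c, hc⟩ := hd
  obtain ⟨hb1, hb2⟩ := coef_bound hN hc h1 h2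
  interval_cases c <;> omega

set_option maxHeartbeats 1600000 in
lemma arith4 (n m j1 j2 j3 j4 d X1 X2 X3 X4 : ℤ)
    (hn : 3 ≤ n) (hm : n = 2 * m + 1)
    (hj1 : 0 ≤ j1 ∧ j1 < 2*n) (hj2 : 0 ≤ j2 ∧ j2 < 2*n)
    (hj3 : 0 ≤ j3 ∧ j3 < 2*n) (hj4 : 0 ≤ j4 ∧ j4 < 2*n)
    (hd : -(2*n) < d ∧ d < 2*n)
    (hj34 : j3 ≠ j4)
    (hx1 : (j1 < n ∧ X1 = 2*j1+1) ∨ (n < j1 ∧ X1 = 2*j1 - 2*n))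
    (hx2 : (j2 < n ∧ X2 = 2*j2+1) ∨ (n < j2 ∧ X2 = 2*j2 - 2*n))
    (hx3 : (j3 < n ∧ X3 = 2*j3+1) ∨ (n < j3 ∧ X3 = 2*j3 - 2*n))
    (hx4 : (j4 < n ∧ X4 = 2*j4+1) ∨ (n < j4 ∧ X4 = 2*j4 - 2*n))
    (H1 : j3 + d - j1 = -(2*n) ∨ j3 + d - j1 = 0 ∨ j3 + d - j1 = 2*n)
    (H2 : j4 + d - j2 = -(2*n) ∨ j4 + d - j2 = 0 ∨ j4 + d - j2 = 2*n)
    (H3 : X4 + d - X1 = -(2*n) ∨ X4 + d - X1 = 0 ∨ X4 + d - X1 = 2*n)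
    (H4 : X3 + d - X2 = -(2*n) ∨ X3 + d - X2 = 0 ∨ X3 + d - X2 = 2*n) :
    False := by
  omega

set_option maxHeartbeats 800000 in
lemma no4 {n : ℕ} (hn : 3 ≤ n) (hodd : Odd n) (p1 p2 p3 p4 : ColIdx n)
    (h34 : p3 ≠ p4)
    (e0a : fA p1 = fA p2) (e0b : fA p3 = fA p4)
    (e1a : fB p1 = fB p3) (e1b : fB p2 = fB p4)
    (e2a : fC p1 = fC p4) (e2b : fC p2 = fC p3) : False := by
  obtain ⟨m, hm⟩ := hodd
  have hj1 := p1.1.1.isLt; have hj2 := p2.1.1.isLt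
  have hj3 := p3.1.1.isLt; have hj4 := p4.1.1.isLt
  have ha1 := p1.1.2.isLt; have ha3 := p3.1.2.isLt
  have hlx1 := xfun_lt (n := n) (j := (p1.1.1 : ℕ)) hj1
  have hlx2 := xfun_lt (n := n) (j := (p2.1.1 : ℕ)) hj2
  have hlx3 := xfun_lt (n := n) (j := (p3.1.1 : ℕ)) hj3
  have hlx4 := xfun_lt (n := n) (j := (p4.1.1 : ℕ)) hj4
  simp only [fA] at e0a e0b
  have hj34 : (p3.1.1 : ℕ) ≠ (p4.1.1 : ℕ) := by
    intro h
    exact h34 (Subtype.ext (Prod.ext (Fin.ext h) (Fin.ext e0b)))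
  have d1 := mod_dvd e1a
  have d2 := mod_dvd e1b
  have d3 := mod_dvd e2a
  have d4 := mod_dvd e2b
  rw [← e0a, ← e0b] at d2
  rw [← e0b] at d3
  rw [← e0a] at d4
  have hN : (0:ℤ) < ((2*n : ℕ) : ℤ) := by omega
  set j1 : ℤ := ((p1.1.1 : ℕ) : ℤ) with hdj1
  set j2 : ℤ := ((p2.1.1 : ℕ) : ℤ) with hdj2
  set j3 : ℤ := ((p3.1.1 : ℕ) : ℤ) with hdj3
  set j4 : ℤ := ((p4.1.1 : ℕ) : ℤ) with hdj4
  set X1 : ℤ := ((xfun n (p1.1.1 : ℕ) : ℕ) : ℤ) with hdX1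
  set X2 : ℤ := ((xfun n (p2.1.1 : ℕ) : ℕ) : ℤ) with hdX2
  set X3 : ℤ := ((xfun n (p3.1.1 : ℕ) : ℕ) : ℤ) with hdX3
  set X4 : ℤ := ((xfun n (p4.1.1 : ℕ) : ℕ) : ℤ) with hdX4
  set d : ℤ := ((p3.1.2 : ℕ) : ℤ) - ((p1.1.2 : ℕ) : ℤ) with hdd
  have a_hn : (3:ℤ) ≤ (n:ℤ) := by omega
  have a_hm : (n:ℤ) = 2 * (m:ℤ) + 1 := by omega
  have a_hj1 : (0:ℤ) ≤ j1 ∧ j1 < 2*(n:ℤ) := by omega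
  have a_hj2 : (0:ℤ) ≤ j2 ∧ j2 < 2*(n:ℤ) := by omega
  have a_hj3 : (0:ℤ) ≤ j3 ∧ j3 < 2*(n:ℤ) := by omega
  have a_hj4 : (0:ℤ) ≤ j4 ∧ j4 < 2*(n:ℤ) := by omega
  have a_hd : -(2*(n:ℤ)) < d ∧ d < 2*(n:ℤ) := by omega
  have a_hj34 : j3 ≠ j4 := by omega
  have G1 : j3 + d - j1 = -(2*(n:ℤ)) ∨ j3 + d - j1 = 0 ∨ j3 + d - j1 = 2*(n:ℤ) := by
    have := dvd_trichotomy hN d1 (by omega) (by omega); omega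
  have G2 : j4 + d - j2 = -(2*(n:ℤ)) ∨ j4 + d - j2 = 0 ∨ j4 + d - j2 = 2*(n:ℤ) := by
    clear G1
    have := dvd_trichotomy hN d2 (by omega) (by omega); omega
  have G3 : X4 + d - X1 = -(2*(n:ℤ)) ∨ X4 + d - X1 = 0 ∨ X4 + d - X1 = 2*(n:ℤ) := by
    clear G1 G2
    have := dvd_trichotomy hN d3 (by omega) (by omega); omega
  have G4 : X3 + d - X2 = -(2*(n:ℤ)) ∨ X3 + d - X2 = 0 ∨ X3 + d - X2 = 2*(n:ℤ) := by
    clear G1 G2 G3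
    have := dvd_trichotomy hN d4 (by omega) (by omega); omega
  have hx1 := xfun_int (n := n) hj1 p1.2
  have hx2 := xfun_int (n := n) hj2 p2.2
  have hx3 := xfun_int (n := n) hj3 p3.2
  have hx4 := xfun_int (n := n) hj4 p4.2
  exact arith4 (n:ℤ) (m:ℤ) j1 j2 j3 j4 d X1 X2 X3 X4 a_hn a_hm a_hj1 a_hj2 a_hj3 a_hj4
    a_hd a_hj34 hx1 hx2 hx3 hx4 G1 G2 G3 G4

/-! ### the lower bound -/

lemma lower_bound {n : ℕ} (hn : 3 ≤ n) (hodd : Odd n)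
    (v : ColIdx n → ZMod 2) (hv : v ≠ 0) (hmul : (Hmat n).mulVec v = 0) :
    6 ≤ (Finset.univ.filter fun p : ColIdx n => v p ≠ 0).card := by
  by_contra hcard
  push_neg at hcard
  obtain ⟨p1, hp1⟩ : ∃ p, v p ≠ 0 := Function.ne_iff.mp hv
  have hn0 : 0 < n := by omega
  -- the three mates of p1
  obtain ⟨p2, h21, hv2, hA2⟩ := mate v hmul ⟨fA p1, by
      simp only [fA]; have := p1.1.2.isLt; omega⟩ fA p1
    (fun q => charA (fA p1) p1.1.2.isLt q) hp1
  obtain ⟨p3, h31, hv3, hB3⟩ := mate v hmul ⟨fB p1 + 2 * n, by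
      have : fB p1 < 2 * n := Nat.mod_lt _ (by omega); omega⟩ fB p1
    (fun q => charB (fB p1) (Nat.mod_lt _ (by omega)) q) hp1
  obtain ⟨p4, h41, hv4, hC4⟩ := mate v hmul ⟨fC p1 + 4 * n, by
      have : fC p1 < 2 * n := Nat.mod_lt _ (by omega); omega⟩ fC p1
    (fun q => charC hn0 (fC p1) (Nat.mod_lt _ (by omega)) q) hp1
  have h32 : p3 ≠ p2 := fun h => h21 (injAB hA2 (h ▸ hB3))
  have h42 : p4 ≠ p2 := fun h => h21 (injAC hA2 (h ▸ hC4))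
  have h43 : p4 ≠ p3 := fun h => h31 (injBC hB3 (h ▸ hC4))
  -- the support is exactly {p1, p2, p3, p4}
  set S := Finset.univ.filter (fun p : ColIdx n => v p ≠ 0) with hS
  set T : Finset (ColIdx n) := {p1, p2, p3, p4} with hT
  have hTS : T ⊆ S := by
    intro q hq
    simp only [hT, Finset.mem_insert, Finset.mem_singleton] at hq
    rcases hq with h | h | h | h <;> subst h <;>
      exact Finset.mem_filter.mpr ⟨Finset.mem_univ _, by assumption⟩
  have hTcard : T.card = 4 := by
    have n1 : p1 ∉ ({p2, p3, p4} : Finset (ColIdx n)) := by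
      simp only [Finset.mem_insert, Finset.mem_singleton]
      push_neg
      exact ⟨fun h => h21 h.symm, fun h => h31 h.symm, fun h => h41 h.symm⟩
    have n2 : p2 ∉ ({p3, p4} : Finset (ColIdx n)) := by
      simp only [Finset.mem_insert, Finset.mem_singleton]
      push_neg
      exact ⟨fun h => h32 h.symm, fun h => h42 h.symm⟩
    have n3 : p3 ∉ ({p4} : Finset (ColIdx n)) := by
      simp only [Finset.mem_singleton]
      exact fun h => h43 h.symm
    rw [hT, Finset.card_insert_of_notMem n1, Finset.card_insert_of_notMem n2,
      Finset.card_insert_of_notMem n3, Finset.card_singleton]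
  have hSeven : 2 ∣ S.card := by
    rw [Finset.card_eq_sum_card_fiberwise (f := fun q : ColIdx n => fA q)
      (t := Finset.range (2 * n)) (fun q _ => Finset.mem_range.mpr q.1.2.isLt)]
    refine Finset.dvd_sum ?_
    intro c hc
    have hc2 : c < 2 * n := Finset.mem_range.mp hc
    have h2 := fiber_even v hmul ⟨c, by omega⟩ fA c (fun q => charA c hc2 q)
    have : S.filter (fun q => fA q = c) = Finset.univ.filter (fun q => v q ≠ 0 ∧ fA q = c) := by
      rw [hS, Finset.filter_filter]
    rwa [this]
  have hST : S = T := by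
    have h4 : 4 ≤ S.card := hTcard ▸ Finset.card_le_card hTS
    have h5 : S.card ≤ 5 := by omega
    have hS4 : S.card = 4 := by omega
    exact (Finset.eq_of_subset_of_card_le hTS (hS4.trans hTcard.symm).le).symm
  have hmemT : ∀ q : ColIdx n, v q ≠ 0 → q ∈ T := by
    intro q hq
    rw [← hST]
    exact Finset.mem_filter.mpr ⟨Finset.mem_univ _, hq⟩
  -- the A-mate of p3 must be p4
  have e0b : fA p3 = fA p4 := by
    obtain ⟨q, hq3, hqv, hqA⟩ := mate v hmul ⟨fA p3, by
        simp only [fA]; have := p3.1.2.isLt; omega⟩ fA p3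
      (fun q => charA (fA p3) p3.1.2.isLt q) hv3
    have := hmemT q hqv
    simp only [hT, Finset.mem_insert, Finset.mem_singleton] at this
    rcases this with h | h | h | h
    · subst h; exact absurd (injAB hqA.symm hB3) h31
    · subst h; exact absurd (injAB (hqA.symm.trans hA2) hB3) h31
    · exact absurd h hq3
    · subst h; exact hqA.symm
  -- the B-mate of p2 must be p4
  have e1b : fB p2 = fB p4 := by
    obtain ⟨q, hq2, hqv, hqB⟩ := mate v hmul ⟨fB p2 + 2 * n, by
        have : fB p2 < 2 * n := Nat.mod_lt _ (by omega); omega⟩ fB p2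
      (fun q => charB (fB p2) (Nat.mod_lt _ (by omega)) q) hv2
    have := hmemT q hqv
    simp only [hT, Finset.mem_insert, Finset.mem_singleton] at this
    rcases this with h | h | h | h
    · subst h; exact absurd (injAB hA2 hqB.symm) h21
    · exact absurd h hq2
    · subst h; exact absurd (injAB hA2 (hqB.symm.trans hB3)) h21
    · subst h; exact hqB.symm
  -- the C-mate of p2 must be p3
  have e2b : fC p2 = fC p3 := by
    obtain ⟨q, hq2, hqv, hqC⟩ := mate v hmul ⟨fC p2 + 4 * n, by
        have : fC p2 < 2 * n := Nat.mod_lt _ (by omega); omega⟩ fC p2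
      (fun q => charC hn0 (fC p2) (Nat.mod_lt _ (by omega)) q) hv2
    have := hmemT q hqv
    simp only [hT, Finset.mem_insert, Finset.mem_singleton] at this
    rcases this with h | h | h | h
    · subst h; exact absurd (injAC hA2 hqC.symm) h21
    · exact absurd h hq2
    · subst h; exact hqC.symm
    · subst h; exact absurd (injAC hA2 (hqC.symm.trans hC4)) h21
  exact no4 hn hodd p1 p2 p3 p4 h43.symm hA2.symm e0b hB3.symm e1b hC4.symm e2b

def mkCol {n : ℕ} (j a : ℕ) (hj : j < 2 * n) (ha : a < 2 * n) (hjn : j ≠ n) : ColIdx n :=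
  ⟨(⟨j, hj⟩, ⟨a, ha⟩), hjn⟩

lemma mkCol_ne {n : ℕ} {j a j' a' : ℕ} {hj ha hjn hj' ha' hjn'}
    (h : ¬(j = j' ∧ a = a')) :
    mkCol (n := n) j a hj ha hjn ≠ mkCol (n := n) j' a' hj' ha' hjn' := by
  intro he
  exact h (by simpa [mkCol, Subtype.ext_iff, Prod.ext_iff, Fin.ext_iff] using he)

lemma mod_helper {x r N : ℕ} (h : x = r ∨ x = N + r) (hr : r < N) : x % N = r := by
  rcases h with h | h <;> subst h
  · exact Nat.mod_eq_of_lt hr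
  · rw [Nat.add_mod_left]; exact Nat.mod_eq_of_lt hr

lemma blk_eq' {n j a u w U W : ℕ} (h1 : (j + a) % (2 * n) = u) (h2 : (xfun n j + a) % (2 * n) = w)
    (hU : u + 2 * n = U) (hW : w + 4 * n = W) : Blk n j a = {a, U, W} := by
  rw [Blk, h1, h2, hU, hW]

lemma ite_or3 {i x y z : ℕ} (hxy : x ≠ y) (hxz : x ≠ z) (hyz : y ≠ z) :
    (if i = x ∨ i = y ∨ i = z then (1 : ZMod 2) else 0)
      = (if i = x then (1 : ZMod 2) else 0)
        + ((if i = y then (1 : ZMod 2) else 0) + (if i = z then (1 : ZMod 2) else 0)) := by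
  by_cases h1 : i = x <;> by_cases h2 : i = y <;> by_cases h3 : i = z <;> simp_all

set_option maxHeartbeats 1600000 in
lemma exists_wt6 {n : ℕ} (h5 : 5 ≤ n) :
    ∃ v : ColIdx n → ZMod 2, v ≠ 0 ∧ (Hmat n).mulVec v = 0 ∧
      (Finset.univ.filter fun p : ColIdx n => v p ≠ 0).card = 6 := by
  have hx0 : xfun n 0 = 1 := by simp only [xfun, if_pos (show 0 < n by omega)]
  have hx1 : xfun n 1 = 3 := by simp only [xfun, if_pos (show 1 < n by omega)]
  have hx3 : xfun n 3 = 7 := by simp only [xfun, if_pos (show 3 < n by omega)]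
  have hx4 : xfun n 4 = 9 := by simp only [xfun, if_pos (show 4 < n by omega)]
  set q1 : ColIdx n := mkCol 0 0 (by omega) (by omega) (by omega) with hq1
  set q2 : ColIdx n := mkCol 1 0 (by omega) (by omega) (by omega) with hq2
  set q3 : ColIdx n := mkCol 3 (2*n-4) (by omega) (by omega) (by omega) with hq3
  set q4 : ColIdx n := mkCol 4 (2*n-4) (by omega) (by omega) (by omega) with hq4
  set q5 : ColIdx n := mkCol 1 (2*n-2) (by omega) (by omega) (by omega) with hq5
  set q6 : ColIdx n := mkCol 3 (2*n-2) (by omega) (by omega) (by omega) with hq6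
  set T : Finset (ColIdx n) := {q1, q2, q3, q4, q5, q6} with hTdef
  have n1 : q1 ∉ ({q2, q3, q4, q5, q6} : Finset (ColIdx n)) := by
    simp only [Finset.mem_insert, Finset.mem_singleton, hq1, hq2, hq3, hq4, hq5, hq6]
    push_neg
    exact ⟨mkCol_ne (by omega), mkCol_ne (by omega), mkCol_ne (by omega),
      mkCol_ne (by omega), mkCol_ne (by omega)⟩
  have n2 : q2 ∉ ({q3, q4, q5, q6} : Finset (ColIdx n)) := by
    simp only [Finset.mem_insert, Finset.mem_singleton, hq2, hq3, hq4, hq5, hq6]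
    push_neg
    exact ⟨mkCol_ne (by omega), mkCol_ne (by omega), mkCol_ne (by omega), mkCol_ne (by omega)⟩
  have n3 : q3 ∉ ({q4, q5, q6} : Finset (ColIdx n)) := by
    simp only [Finset.mem_insert, Finset.mem_singleton, hq3, hq4, hq5, hq6]
    push_neg
    exact ⟨mkCol_ne (by omega), mkCol_ne (by omega), mkCol_ne (by omega)⟩
  have n4 : q4 ∉ ({q5, q6} : Finset (ColIdx n)) := by
    simp only [Finset.mem_insert, Finset.mem_singleton, hq4, hq5, hq6]
    push_neg
    exact ⟨mkCol_ne (by omega), mkCol_ne (by omega)⟩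
  have n5 : q5 ∉ ({q6} : Finset (ColIdx n)) := by
    simp only [Finset.mem_singleton, hq5, hq6]
    exact mkCol_ne (by omega)
  refine ⟨fun q => if q ∈ T then 1 else 0, ?_, ?_, ?_⟩
  · intro h0
    have h1 := congrFun h0 q1
    have hm : q1 ∈ T := Finset.mem_insert_self _ _
    simp only [hm, if_pos, Pi.zero_apply] at h1
    exact one_ne_zero h1
  · funext i
    simp only [Matrix.mulVec, dotProduct, Pi.zero_apply]
    have hsplit : ∀ q : ColIdx n, Hmat n i q * (if q ∈ T then (1 : ZMod 2) else 0)
        = if q ∈ T then Hmat n i q else 0 := by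
      intro q; by_cases h : q ∈ T <;> simp [h]
    rw [Finset.sum_congr rfl (fun q _ => hsplit q), Finset.sum_ite_mem, Finset.univ_inter,
      hTdef, Finset.sum_insert n1, Finset.sum_insert n2, Finset.sum_insert n3,
      Finset.sum_insert n4, Finset.sum_insert n5, Finset.sum_singleton]
    have hB1 : Blk n 0 0 = {0, 2*n, 4*n+1} :=
      blk_eq' (mod_helper (r := 0) (by omega) (by omega))
        (mod_helper (r := 1) (by rw [hx0]; omega) (by omega)) (by omega) (by omega)
    have hB2 : Blk n 1 0 = {0, 2*n+1, 4*n+3} :=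
      blk_eq' (mod_helper (r := 1) (by omega) (by omega))
        (mod_helper (r := 3) (by rw [hx1]; omega) (by omega)) (by omega) (by omega)
    have hB3 : Blk n 3 (2*n-4) = {2*n-4, 4*n-1, 4*n+3} :=
      blk_eq' (mod_helper (r := 2*n-1) (by omega) (by omega))
        (mod_helper (r := 3) (by rw [hx3]; omega) (by omega)) (by omega) (by omega)
    have hB4 : Blk n 4 (2*n-4) = {2*n-4, 2*n, 4*n+5} :=
      blk_eq' (mod_helper (r := 0) (by omega) (by omega))
        (mod_helper (r := 5) (by rw [hx4]; omega) (by omega)) (by omega) (by omega)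
    have hB5 : Blk n 1 (2*n-2) = {2*n-2, 4*n-1, 4*n+1} :=
      blk_eq' (mod_helper (r := 2*n-1) (by omega) (by omega))
        (mod_helper (r := 1) (by rw [hx1]; omega) (by omega)) (by omega) (by omega)
    have hB6 : Blk n 3 (2*n-2) = {2*n-2, 2*n+1, 4*n+5} :=
      blk_eq' (mod_helper (r := 1) (by omega) (by omega))
        (mod_helper (r := 5) (by rw [hx3]; omega) (by omega)) (by omega) (by omega)
    show (if (i:ℕ) ∈ Blk n 0 0 then (1:ZMod 2) else 0)
      + ((if (i:ℕ) ∈ Blk n 1 0 then (1:ZMod 2) else 0)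
      + ((if (i:ℕ) ∈ Blk n 3 (2*n-4) then (1:ZMod 2) else 0)
      + ((if (i:ℕ) ∈ Blk n 4 (2*n-4) then (1:ZMod 2) else 0)
      + ((if (i:ℕ) ∈ Blk n 1 (2*n-2) then (1:ZMod 2) else 0)
      + (if (i:ℕ) ∈ Blk n 3 (2*n-2) then (1:ZMod 2) else 0))))) = 0
    rw [hB1, hB2, hB3, hB4, hB5, hB6]
    simp only [Finset.mem_insert, Finset.mem_singleton]
    rw [ite_or3 (by omega) (by omega) (by omega), ite_or3 (by omega) (by omega) (by omega),
      ite_or3 (by omega) (by omega) (by omega), ite_or3 (by omega) (by omega) (by omega),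
      ite_or3 (by omega) (by omega) (by omega), ite_or3 (by omega) (by omega) (by omega)]
    split_ifs <;> decide
  · have hfilter : (Finset.univ.filter fun p : ColIdx n =>
        (if p ∈ T then (1:ZMod 2) else 0) ≠ 0) = T := by
      ext q
      by_cases h : q ∈ T <;> simp [h]
    rw [hfilter, hTdef, Finset.card_insert_of_notMem n1, Finset.card_insert_of_notMem n2,
      Finset.card_insert_of_notMem n3, Finset.card_insert_of_notMem n4,
      Finset.card_insert_of_notMem n5, Finset.card_singleton]

def v3 : ColIdx 3 → ZMod 2 := fun q =>
  if ((q.1.1 : ℕ), (q.1.2 : ℕ)) ∈ [(0,0),(2,0),(0,2),(2,2),(0,4),(2,4)] then 1 else 0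

set_option maxHeartbeats 1000000 in
lemma wt6_n3 : v3 ≠ 0 ∧ (Hmat 3).mulVec v3 = 0 ∧
    (Finset.univ.filter fun p : ColIdx 3 => v3 p ≠ 0).card = 6 := by
  refine ⟨by decide, by decide, by decide⟩

theorem stmt14 (n : ℕ) (hn : 3 ≤ n) (hodd : Odd n) :
    -- every nonzero codeword has Hamming weight at least 6
    (∀ v : ColIdx n → ZMod 2, v ≠ 0 → (Hmat n).mulVec v = 0 →
      6 ≤ (Finset.univ.filter fun p : ColIdx n => v p ≠ 0).card) ∧
    -- and there is a codeword of Hamming weight exactly 6,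
    -- so the minimum distance of the code is exactly 6
    (∃ v : ColIdx n → ZMod 2, v ≠ 0 ∧ (Hmat n).mulVec v = 0 ∧
      (Finset.univ.filter fun p : ColIdx n => v p ≠ 0).card = 6) := by
  constructor
  · exact fun v hv hmul => lower_bound hn hodd v hv hmul
  · by_cases h3 : n = 3
    · subst h3
      exact ⟨v3, wt6_n3.1, wt6_n3.2.1, wt6_n3.2.2⟩
    · obtain ⟨m, hm⟩ := hodd
      exact exists_wt6 (by omega)
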